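/- Let n ≥ 2 and suppose (λ*, v*) is an eigenpair with ‖v*‖₂ = 1 such that λ* is an eigenvalue of J(v*) of algebraic multiplicity one (over ℂ) and σ ∈ ℝ is not a complex eigenvalue of J(v*). Then the spectral radius (over ℂ) of the matrix (I − v*v*ᵀ)(J(v*) − σI)⁻¹ equals the maximum of 1/|μ − σ| over all complex eigenvalues μ of J(v*) with μ ≠ λ*. Consequently the spectral radius of φ'(v*) = |λ* − σ|(I − v*v*ᵀ)(J(v*) − σI)⁻¹ equals γ = |λ* − σ|/|μ₂ − σ|, where μ₂ is a complex eigenvalue of J(v*) distinct from λ* minimizing |μ − σ|. -/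

import Mathlib

open Matrix Asymptotics Topology
open scoped RealInnerProductSpace

noncomputable def mvCLM {ι : Type*} [Fintype ι] [DecidableEq ι] (M : Matrix ι ι ℝ) :
    EuclideanSpace ℝ ι →L[ℝ] EuclideanSpace ℝ ι :=
  LinearMap.toContinuousLinearMap (Matrix.toEuclideanLin M)

noncomputable def invitPsi {n : ℕ} (J : EuclideanSpace ℝ (Fin n) → Matrix (Fin n) (Fin n) ℝ)
    (σ : ℝ) (v : EuclideanSpace ℝ (Fin n)) : EuclideanSpace ℝ (Fin n) :=
  mvCLM ((J v - σ • 1)⁻¹) v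

noncomputable def invitPhi {n : ℕ} (J : EuclideanSpace ℝ (Fin n) → Matrix (Fin n) (Fin n) ℝ)
    (σ : ℝ) (v : EuclideanSpace ℝ (Fin n)) : EuclideanSpace ℝ (Fin n) :=
  ‖invitPsi J σ v‖⁻¹ • invitPsi J σ v

noncomputable def rayQuot {n : ℕ} (A : EuclideanSpace ℝ (Fin n) → Matrix (Fin n) (Fin n) ℝ)
    (v : EuclideanSpace ℝ (Fin n)) : ℝ :=
  ⟪v, mvCLM (A v) v⟫ / ⟪v, v⟫


section Helpers
open Polynomial
set_option linter.unnecessarySeqFocus false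


variable {n : ℕ}

lemma eval_charpoly' (M : Matrix (Fin n) (Fin n) ℂ) (z : ℂ) :
    M.charpoly.eval z = (z • (1 : Matrix (Fin n) (Fin n) ℂ) - M).det := by
  rw [Matrix.charpoly, ← Polynomial.coe_evalRingHom, RingHom.map_det]
  congr 1
  ext i j
  by_cases h : i = j <;>
    simp [h, charmatrix_apply, Matrix.diagonal, Matrix.one_apply, Matrix.smul_apply]

lemma mem_spectrum_iff' (M : Matrix (Fin n) (Fin n) ℂ) (z : ℂ) :
    z ∈ spectrum ℂ M ↔ M.charpoly.IsRoot z := by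
  rw [spectrum.mem_iff, Matrix.isUnit_iff_isUnit_det, isUnit_iff_ne_zero, not_not,
    Polynomial.IsRoot, eval_charpoly', Matrix.algebraMap_eq_diagonal]
  congr! 2
  ext i j
  by_cases h : i = j <;> simp [h, Matrix.diagonal, Matrix.one_apply]

-- eval of the "Q" polynomial
lemma evalQ (μs : Multiset ℂ) (s z : ℂ) :
    ((μs.map (fun μ => C (μ - s) * X - 1)).prod).eval z
      = (μs.map (fun μ => (μ - s) * z - 1)).prod := by
  rw [eval_multiset_prod, Multiset.map_map]
  congr 1
  apply Multiset.map_congr rfl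
  intro μ _
  simp

lemma detQ (Bc : Matrix (Fin n) (Fin n) ℂ) (s z : ℂ) (hz : z ≠ 0) :
    (z • (Bc - s • 1) - 1).det
      = (Bc.charpoly.roots.map (fun μ => (μ - s) * z - 1)).prod := by
  have hsplit := IsAlgClosed.splits Bc.charpoly
  have hcard : Bc.charpoly.roots.card = n := by
    rw [(Polynomial.splits_iff_card_roots).mp hsplit, Matrix.charpoly_natDegree_eq_dim,
      Fintype.card_fin]
  have h1 : z • (Bc - s • 1) - 1 = z • (Bc - (s + z⁻¹) • 1) := by
    ext i j
    by_cases h : i = j <;>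
      simp [h, Matrix.one_apply, Matrix.smul_apply, Matrix.sub_apply, mul_add] <;>
      field_simp <;> ring
  have hev : Bc.charpoly.eval (s + z⁻¹) = (Bc.charpoly.roots.map (fun μ => (s + z⁻¹) - μ)).prod := by
    conv_lhs => rw [hsplit.eq_prod_roots_of_monic Bc.charpoly_monic]
    rw [eval_multiset_prod, Multiset.map_map]
    congr 1
    apply Multiset.map_congr rfl
    intro μ _
    simp
  have h2 : (Bc - (s + z⁻¹) • 1) = -((s + z⁻¹) • 1 - Bc) := by rw [neg_sub]
  rw [h1, Matrix.det_smul, h2, Matrix.det_neg, ← eval_charpoly', hev, Fintype.card_fin]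
  have h3 : (Bc.charpoly.roots.map (fun μ => (μ - s) * z - 1))
      = Bc.charpoly.roots.map (fun μ => (-z) * ((s + z⁻¹) - μ)) := by
    apply Multiset.map_congr rfl
    intro μ _
    field_simp
    ring
  rw [h3]
  have h4 : (Bc.charpoly.roots.map (fun μ => (-z) * ((s + z⁻¹) - μ))).prod
      = (-z) ^ n * (Bc.charpoly.roots.map (fun μ => (s + z⁻¹) - μ)).prod := by
    rw [Multiset.prod_map_mul]
    congr 1
    rw [Multiset.map_const', Multiset.prod_replicate, hcard]
  rw [h4, neg_pow]
  ring

lemma coreId (Bc : Matrix (Fin n) (Fin n) ℂ) (w : Fin n → ℂ) (l s : ℂ)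
    (hw : w ⬝ᵥ w = 1) (heig : Bc *ᵥ w = l • w)
    (hl : l ∈ Bc.charpoly.roots)
    (hs : ∀ μ ∈ Bc.charpoly.roots, μ ≠ s) :
    ((1 - vecMulVec w w) * (Bc - s • 1)⁻¹).charpoly * C (Bc - s • 1).det
      = ((Bc.charpoly.roots.erase l).map (fun μ => C (μ - s) * X - 1)).prod
        * (C (l - s) * X) := by
  set μs := Bc.charpoly.roots with hμs
  set Dc := Bc - s • 1 with hDc
  set Mc := (1 - vecMulVec w w) * Dc⁻¹ with hMc
  set Q : Polynomial ℂ := (μs.map (fun μ => C (μ - s) * X - 1)).prod with hQ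
  -- Dc is invertible
  have hsplit := IsAlgClosed.splits Bc.charpoly
  have hcard : μs.card = n := by
    rw [hμs, (Polynomial.splits_iff_card_roots).mp hsplit, Matrix.charpoly_natDegree_eq_dim,
      Fintype.card_fin]
  have hdet : Dc.det ≠ 0 := by
    have h2 : Dc = -(s • 1 - Bc) := by rw [hDc, neg_sub]
    rw [h2, Matrix.det_neg, ← eval_charpoly',
      hsplit.eq_prod_roots_of_monic Bc.charpoly_monic, eval_multiset_prod,
      Multiset.map_map]
    apply mul_ne_zero
    · exact pow_ne_zero _ (by norm_num)
    · apply Multiset.prod_ne_zero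
      intro hmem
      obtain ⟨μ, hμ, hμ0⟩ := Multiset.mem_map.mp hmem
      simp only [Function.comp_apply, eval_sub, eval_X, eval_C] at hμ0
      exact hs μ hμ (sub_eq_zero.mp hμ0).symm
  have hdetU : IsUnit Dc.det := isUnit_iff_ne_zero.mpr hdet
  -- Dc *ᵥ w
  have hDw : Dc *ᵥ w = (l - s) • w := by
    rw [hDc, Matrix.sub_mulVec, heig, Matrix.smul_mulVec, Matrix.one_mulVec, sub_smul]
  have hQ0 : Q ≠ 0 := by
    intro h
    have := congrArg (eval 0) h
    rw [hQ, evalQ] at this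
    simp only [eval_zero] at this
    rw [Multiset.prod_eq_zero_iff] at this
    obtain ⟨μ, hμ, h⟩ := Multiset.mem_map.mp this
    have h' : ((μ - s) * 0 - 1 : ℂ) = 0 := h
    norm_num at h'
  -- main evaluation identity off a finite set
  have key : Mc.charpoly * C Dc.det * (C (l - s) * X - 1) = Q * (C (l - s) * X) := by
    apply Polynomial.eq_of_infinite_eval_eq
    have hbad : ({z : ℂ | z = 0 ∨ Q.eval z = 0}).Finite := by
      have : {z : ℂ | z = 0 ∨ Q.eval z = 0} ⊆ insert 0 (Q.roots.toFinset : Set ℂ) := by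
        intro z hz
        rcases hz with h | h
        · exact Set.mem_insert_iff.mpr (Or.inl h)
        · exact Set.mem_insert_iff.mpr (Or.inr (Finset.mem_coe.mpr
            (Multiset.mem_toFinset.mpr ((Polynomial.mem_roots hQ0).mpr h))))
      exact Set.Finite.subset (Set.Finite.insert 0 (Q.roots.toFinset.finite_toSet)) this
    apply Set.Infinite.mono _ (Set.Infinite.diff (Set.infinite_univ (α := ℂ)) hbad)
    intro z hz
    simp only [Set.mem_diff, Set.mem_univ, Set.mem_setOf_eq, true_and] at hz
    push_neg at hz
    obtain ⟨hz0, hQz⟩ := hz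
    -- evaluate both sides
    set S := z • Dc - 1 with hS
    have hSdet : S.det = (μs.map (fun μ => (μ - s) * z - 1)).prod := detQ Bc s z hz0
    have hQev : Q.eval z = (μs.map (fun μ => (μ - s) * z - 1)).prod := evalQ μs s z
    have hSdet' : S.det ≠ 0 := by rw [hSdet, ← hQev]; exact hQz
    have hSU : IsUnit S.det := isUnit_iff_ne_zero.mpr hSdet'
    set b := (l - s) * z - 1 with hb
    have hbne : b ≠ 0 := by
      intro h
      apply hQz
      rw [hQev]
      apply Multiset.prod_eq_zero
      rw [Multiset.mem_map]
      exact ⟨l, hl, by rw [← hb]; exact h⟩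
    -- S *ᵥ w
    have hSw : S *ᵥ w = b • w := by
      rw [hS, Matrix.sub_mulVec, Matrix.smul_mulVec, hDw, Matrix.one_mulVec, hb,
        smul_smul, sub_smul, one_smul, mul_comm z (l - s)]
    have hSiw : S⁻¹ *ᵥ w = b⁻¹ • w := by
      have h1 : S⁻¹ *ᵥ (S *ᵥ w) = w := by
        rw [Matrix.mulVec_mulVec, Matrix.nonsing_inv_mul S hSU, Matrix.one_mulVec]
      rw [hSw, Matrix.mulVec_smul] at h1
      rw [eq_inv_smul_iff₀ hbne]
      exact h1
    -- determinant computation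
    have hMD : (z • 1 - Mc) * Dc = S + vecMulVec w w := by
      rw [Matrix.sub_mul, Matrix.smul_mul, Matrix.one_mul, hMc,
        Matrix.nonsing_inv_mul_cancel_right _ _ hdetU, hS]
      abel
    have hdlemma : (S + vecMulVec w w).det = S.det * (1 + b⁻¹) := by
      rw [Matrix.vecMulVec_eq Unit w w, Matrix.det_add_replicateCol_mul_replicateRow hSU]
      congr 1
      rw [Matrix.det_unique]
      simp only [Matrix.add_apply, Matrix.one_apply_eq]
      congr 1
      have : Matrix.replicateRow Unit w * S⁻¹ * Matrix.replicateCol Unit w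
          = Matrix.replicateRow Unit (w ᵥ* S⁻¹) * Matrix.replicateCol Unit w := by
        rw [Matrix.replicateRow_vecMul]
      rw [this, Matrix.replicateRow_mul_replicateCol_apply, ← Matrix.dotProduct_mulVec, hSiw,
        dotProduct_smul, hw, smul_eq_mul, mul_one]
    -- put together
    have hev1 : (z • (1:Matrix (Fin n) (Fin n) ℂ) - Mc).det * Dc.det = S.det * (1 + b⁻¹) := by
      rw [← hdlemma, ← hMD, Matrix.det_mul]
    simp only [Set.mem_setOf_eq, eval_mul, eval_sub, eval_add, eval_one, eval_C, eval_X,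
      eval_charpoly']
    rw [hQev, ← hSdet, ← hb]
    calc (z • (1:Matrix (Fin n) (Fin n) ℂ) - Mc).det * Dc.det * b
        = S.det * (1 + b⁻¹) * b := by rw [hev1]
      _ = S.det * (b + 1) := by
          field_simp
      _ = S.det * ((l - s) * z) := by rw [hb]; ring_nf
  -- factor Q and cancel
  have hcons : l ::ₘ μs.erase l = μs := Multiset.cons_erase hl
  have hQfact : Q = (C (l - s) * X - 1) *
      ((μs.erase l).map (fun μ => C (μ - s) * X - 1)).prod := by
    conv_lhs => rw [hQ, ← hcons]
    rw [Multiset.map_cons, Multiset.prod_cons]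
  have hfne : (C (l - s) * X - 1 : Polynomial ℂ) ≠ 0 := by
    intro h
    have := congrArg (eval 0) h
    simp at this
  set R := ((μs.erase l).map (fun μ => C (μ - s) * X - 1)).prod with hR
  have h0 : (Mc.charpoly * C Dc.det - R * (C (l - s) * X)) * (C (l - s) * X - 1) = 0 := by
    rw [hQfact] at key
    linear_combination key
  rcases mul_eq_zero.mp h0 with h | h
  · exact sub_eq_zero.mp h
  · exact absurd h hfne




lemma eigJ {n : ℕ}
    (A J : EuclideanSpace ℝ (Fin n) → Matrix (Fin n) (Fin n) ℝ)
    (hscale : ∀ α : ℝ, α ≠ 0 → ∀ v : EuclideanSpace ℝ (Fin n), v ≠ 0 → A (α • v) = A v)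
    (hJ : ∀ v : EuclideanSpace ℝ (Fin n), v ≠ 0 →
      HasFDerivAt (fun w => mvCLM (A w) w) (mvCLM (J v)) v)
    (lam : ℝ) (vstar : EuclideanSpace ℝ (Fin n)) (hv : vstar ≠ 0)
    (heig : mvCLM (A vstar) vstar = lam • vstar) :
    mvCLM (J vstar) vstar = lam • vstar := by
  have hg : HasDerivAt (fun t : ℝ => t • vstar) vstar 1 := by
    simpa using (hasDerivAt_id (1:ℝ)).smul_const vstar
  have hJ' : HasFDerivAt (fun w => mvCLM (A w) w) (mvCLM (J vstar)) ((1:ℝ) • vstar) := by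
    simpa using hJ vstar hv
  have hd := hJ'.comp_hasDerivAt (1:ℝ) hg
  have heq : ((fun w => mvCLM (A w) w) ∘ fun t : ℝ => t • vstar) =ᶠ[nhds (1:ℝ)]
      (fun t : ℝ => t • (lam • vstar)) := by
    filter_upwards [isOpen_compl_singleton.mem_nhds
      (by simp : (1:ℝ) ∈ ({(0:ℝ)}ᶜ : Set ℝ))] with t ht
    have ht' : t ≠ 0 := ht
    show mvCLM (A (t • vstar)) (t • vstar) = t • (lam • vstar)
    rw [hscale t ht' vstar hv, ContinuousLinearMap.map_smul, heig]
  have hd2 : HasDerivAt (fun t : ℝ => t • (lam • vstar)) (mvCLM (J vstar) vstar) 1 :=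
    hd.congr_of_eventuallyEq heq.symm
  have hd3 : HasDerivAt (fun t : ℝ => t • (lam • vstar)) (lam • vstar) 1 := by
    simpa using (hasDerivAt_id (1:ℝ)).smul_const (lam • vstar)
  exact hd2.unique hd3

lemma mulVec_eig {n : ℕ} (M : Matrix (Fin n) (Fin n) ℝ) (lam : ℝ)
    (v : EuclideanSpace ℝ (Fin n)) (h : mvCLM M v = lam • v) :
    M *ᵥ (fun i => v i) = fun i => lam * v i := by
  funext i
  have := congrFun (congrArg (fun w : EuclideanSpace ℝ (Fin n) => (w : Fin n → ℝ)) h) i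
  simpa [mvCLM, Matrix.toEuclideanLin_apply] using this


lemma mapC_mul (M N : Matrix (Fin n) (Fin n) ℝ) :
    (M * N).map Complex.ofReal = M.map Complex.ofReal * N.map Complex.ofReal :=
  Matrix.map_mul (f := Complex.ofRealHom)

lemma mapC_det (M : Matrix (Fin n) (Fin n) ℝ) :
    ((M.map Complex.ofReal).det) = (M.det : ℂ) :=
  (RingHom.map_det Complex.ofRealHom M).symm

end Helpers

open scoped Pointwise

/-- Convergence factor: if `λ*` is an algebraically simple eigenvalue of
`J(v*)` and `σ` is not a complex eigenvalue of `J(v*)`, the spectral radius of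
`(I − v*v*ᵀ)(J(v*) − σI)⁻¹` equals `max_{μ ≠ λ*} 1/|μ − σ| = 1/|μ₂ − σ|`, and the spectral
radius of `φ'(v*) = |λ* − σ|(I − v*v*ᵀ)(J(v*) − σI)⁻¹` equals `γ = |λ* − σ|/|μ₂ − σ|`. -/
theorem stmt10 {n : ℕ} (hn : 2 ≤ n)
    (A J : EuclideanSpace ℝ (Fin n) → Matrix (Fin n) (Fin n) ℝ)
    (hsymm : ∀ v : EuclideanSpace ℝ (Fin n), v ≠ 0 → (A v).IsSymm)
    (hsmooth : ContDiffOn ℝ 1 (fun w i j => A w i j) {(0 : EuclideanSpace ℝ (Fin n))}ᶜ)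
    (hscale : ∀ α : ℝ, α ≠ 0 → ∀ v : EuclideanSpace ℝ (Fin n), v ≠ 0 → A (α • v) = A v)
    (hJ : ∀ v : EuclideanSpace ℝ (Fin n), v ≠ 0 →
      HasFDerivAt (fun w => mvCLM (A w) w) (mvCLM (J v)) v)
    (lam σ : ℝ) (vstar : EuclideanSpace ℝ (Fin n)) (hnorm : ‖vstar‖ = 1)
    (heig : mvCLM (A vstar) vstar = lam • vstar)
    (hmult : ((J vstar).map (Complex.ofReal)).charpoly.rootMultiplicity (lam : ℂ) = 1)
    (hσ : (σ : ℂ) ∉ spectrum ℂ ((J vstar).map (Complex.ofReal)))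
    (μ₂ : ℂ) (hμ₂ : μ₂ ∈ spectrum ℂ ((J vstar).map (Complex.ofReal)))
    (hμ₂ne : μ₂ ≠ (lam : ℂ))
    (hmin : ∀ μ ∈ spectrum ℂ ((J vstar).map (Complex.ofReal)), μ ≠ (lam : ℂ) →
      ‖μ₂ - (σ : ℂ)‖ ≤ ‖μ - (σ : ℂ)‖) :
    IsGreatest ((fun z : ℂ => ‖z‖) '' spectrum ℂ
        ((((1 - Matrix.vecMulVec vstar vstar) * (J vstar - σ • 1)⁻¹)).map (Complex.ofReal)))
      ‖μ₂ - (σ : ℂ)‖⁻¹ ∧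
    IsGreatest ((fun z : ℂ => ‖z‖) '' spectrum ℂ
        ((|lam - σ| • ((1 - Matrix.vecMulVec vstar vstar) * (J vstar - σ • 1)⁻¹)).map
          (Complex.ofReal)))
      (|lam - σ| / ‖μ₂ - (σ : ℂ)‖) := by
  classical
  have hv : vstar ≠ 0 := by intro h; rw [h, norm_zero] at hnorm; norm_num at hnorm
  -- the eigenvector relation for J
  have hJv : mvCLM (J vstar) vstar = lam • vstar := eigJ A J hscale hJ lam vstar hv heig
  have hmul : (J vstar) *ᵥ (fun i => vstar i) = fun i => lam * vstar i :=
    mulVec_eig (J vstar) lam vstar hJv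
  set Bc : Matrix (Fin n) (Fin n) ℂ := (J vstar).map Complex.ofReal with hBc
  set w : Fin n → ℂ := fun i => (vstar i : ℂ) with hwdef
  have heigC : Bc *ᵥ w = (lam : ℂ) • w := by
    funext i
    have hre := congrFun hmul i
    simp only [Matrix.mulVec, dotProduct] at hre ⊢
    simp only [hBc, hwdef, Matrix.map_apply, Pi.smul_apply, smul_eq_mul]
    norm_cast
  have hwone : w ⬝ᵥ w = 1 := by
    have h1 : (∑ i, vstar i * vstar i) = 1 := by
      have h2 : ‖vstar‖ ^ 2 = (1:ℝ) := by rw [hnorm]; norm_num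
      rw [← real_inner_self_eq_norm_sq] at h2
      simpa only [PiLp.inner_apply, RCLike.inner_apply, conj_trivial, mul_comm] using h2
    simp only [dotProduct, hwdef]
    norm_cast
  -- spectrum / roots dictionary
  have hroots : ∀ z : ℂ, z ∈ spectrum ℂ Bc ↔ z ∈ Bc.charpoly.roots := by
    intro z
    rw [mem_spectrum_iff', Polynomial.mem_roots Bc.charpoly_monic.ne_zero]
  have hcount : Bc.charpoly.roots.count (lam : ℂ) = 1 := by
    rw [Polynomial.count_roots]; exact hmult
  have hl : (lam : ℂ) ∈ Bc.charpoly.roots := by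
    rw [← Multiset.count_pos, hcount]; norm_num
  have hs_ne : ∀ μ ∈ Bc.charpoly.roots, μ ≠ (σ : ℂ) := by
    intro μ hμ h
    exact hσ (h ▸ (hroots μ).mpr hμ)
  have hlam_spec : (lam : ℂ) ∈ spectrum ℂ Bc := (hroots _).mpr hl
  have hlamσ : (lam : ℂ) - (σ : ℂ) ≠ 0 :=
    sub_ne_zero_of_ne (fun h => hσ (h ▸ hlam_spec))
  have hμ₂σ : μ₂ - (σ : ℂ) ≠ 0 := sub_ne_zero_of_ne (fun h => hσ (h ▸ hμ₂))
  have habs_pos : 0 < ‖μ₂ - (σ : ℂ)‖ := by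
    simpa using (norm_pos_iff.mpr hμ₂σ)
  set Dc : Matrix (Fin n) (Fin n) ℂ := Bc - (σ : ℂ) • 1 with hDcdef
  have hDmap : (J vstar - σ • 1).map Complex.ofReal = Dc := by
    ext i j
    by_cases h : i = j <;>
      simp [h, hDcdef, hBc, Matrix.map_apply, Matrix.sub_apply, Matrix.smul_apply,
        Matrix.one_apply]
  have hdet : Dc.det ≠ 0 := by
    have h2 : Dc = -((σ : ℂ) • 1 - Bc) := by rw [hDcdef, neg_sub]
    rw [h2, Matrix.det_neg, ← eval_charpoly']
    apply mul_ne_zero (pow_ne_zero _ (by norm_num))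
    intro h
    exact hσ ((mem_spectrum_iff' Bc (σ : ℂ)).mpr h)
  have hdetU : IsUnit Dc.det := isUnit_iff_ne_zero.mpr hdet
  have hdetR : IsUnit (J vstar - σ • 1).det := by
    rw [isUnit_iff_ne_zero]
    intro h
    apply hdet
    rw [← hDmap, mapC_det, h, Complex.ofReal_zero]
  -- the mapped matrix is Mc
  set Mc : Matrix (Fin n) (Fin n) ℂ := (1 - vecMulVec w w) * Dc⁻¹ with hMcdef
  have hinvmap : ((J vstar - σ • 1)⁻¹).map Complex.ofReal = Dc⁻¹ := by
    have h1 : (J vstar - σ • 1)⁻¹ * (J vstar - σ • 1) = 1 :=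
      Matrix.nonsing_inv_mul _ hdetR
    have h2 : ((J vstar - σ • 1)⁻¹).map Complex.ofReal * Dc = 1 := by
      rw [← hDmap, ← mapC_mul, h1, Matrix.map_one _ Complex.ofReal_zero Complex.ofReal_one]
    exact (Matrix.inv_eq_left_inv h2).symm
  have hmap : (((1 - vecMulVec vstar vstar) * (J vstar - σ • 1)⁻¹)).map Complex.ofReal
      = Mc := by
    rw [mapC_mul, hinvmap, hMcdef]
    congr 1
    ext i j
    by_cases h : i = j <;>
      simp [h, Matrix.map_apply, Matrix.sub_apply, Matrix.one_apply, Matrix.vecMulVec_apply,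
        hwdef]
  -- the key characteristic polynomial identity
  have key := coreId Bc w (lam : ℂ) (σ : ℂ) hwone heigC hl hs_ne
  rw [← hDcdef, ← hMcdef] at key
  set R : Polynomial ℂ :=
    ((Bc.charpoly.roots.erase (lam : ℂ)).map
      (fun μ => Polynomial.C (μ - (σ : ℂ)) * Polynomial.X - 1)).prod with hRdef
  have hevalR : ∀ z : ℂ, R.eval z
      = ((Bc.charpoly.roots.erase (lam : ℂ)).map (fun μ => (μ - (σ : ℂ)) * z - 1)).prod :=
    fun z => evalQ _ _ z
  -- spectrum of Mc characterization
  have hspec_iff : ∀ z : ℂ, z ∈ spectrum ℂ Mc ↔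
      R.eval z * (((lam : ℂ) - (σ : ℂ)) * z) = 0 := by
    intro z
    rw [mem_spectrum_iff']
    have h1 := congrArg (Polynomial.eval z) key
    simp only [Polynomial.eval_mul, Polynomial.eval_C, Polynomial.eval_X] at h1
    constructor
    · intro h
      rw [Polynomial.IsRoot] at h
      rw [← h1, h, zero_mul]
    · intro h
      rw [Polynomial.IsRoot]
      have := h1.trans h
      exact (mul_eq_zero.mp this).resolve_right hdet
  have hlam_not_erase : (lam : ℂ) ∉ Bc.charpoly.roots.erase (lam : ℂ) := by
    rw [← Multiset.count_eq_zero, Multiset.count_erase_self, hcount]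
  -- membership of (μ₂ - σ)⁻¹
  have hz₂ : (μ₂ - (σ : ℂ))⁻¹ ∈ spectrum ℂ Mc := by
    rw [hspec_iff, hevalR]
    apply mul_eq_zero_of_left
    apply Multiset.prod_eq_zero
    rw [Multiset.mem_map]
    refine ⟨μ₂, ?_, ?_⟩
    · exact (Multiset.mem_erase_of_ne hμ₂ne).mpr ((hroots μ₂).mp hμ₂)
    · rw [mul_inv_cancel₀ hμ₂σ, sub_self]
  -- upper bound
  have hub : ∀ z ∈ spectrum ℂ Mc, ‖z‖ ≤ ‖μ₂ - (σ : ℂ)‖⁻¹ := by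
    intro z hz
    rw [hspec_iff] at hz
    rcases mul_eq_zero.mp hz with h | h
    · rw [hevalR] at h
      rw [Multiset.prod_eq_zero_iff] at h
      obtain ⟨μ, hμ, hμ0⟩ := Multiset.mem_map.mp h
      have hμspec : μ ∈ spectrum ℂ Bc := (hroots μ).mpr (Multiset.mem_of_mem_erase hμ)
      have hμne : μ ≠ (lam : ℂ) := fun hh => hlam_not_erase (hh ▸ hμ)
      have hμσ : μ - (σ : ℂ) ≠ 0 := sub_ne_zero_of_ne (hs_ne μ (Multiset.mem_of_mem_erase hμ))
      have hzval : z = (μ - (σ : ℂ))⁻¹ :=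
        eq_inv_of_mul_eq_one_right (by linear_combination hμ0)
      rw [hzval, norm_inv]
      exact inv_anti₀ habs_pos (hmin μ hμspec hμne)
    · rcases mul_eq_zero.mp h with h' | h'
      · exact absurd h' hlamσ
      · rw [h', norm_zero]
        positivity
  have part1 : IsGreatest ((fun z : ℂ => ‖z‖) '' spectrum ℂ
      ((((1 - Matrix.vecMulVec vstar vstar) * (J vstar - σ • 1)⁻¹)).map (Complex.ofReal)))
      ‖μ₂ - (σ : ℂ)‖⁻¹ := by
    rw [hmap]
    constructor
    · exact ⟨(μ₂ - (σ : ℂ))⁻¹, hz₂, by simp⟩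
    · rintro x ⟨z, hz, rfl⟩
      exact hub z hz
  refine ⟨part1, ?_⟩
  -- second part : scaled matrix
  have hlamσR : lam - σ ≠ 0 := by
    intro h
    apply hlamσ
    rw [← Complex.ofReal_sub, h, Complex.ofReal_zero]
  have hrne : ((|lam - σ| : ℝ) : ℂ) ≠ 0 := by
    simp only [ne_eq, Complex.ofReal_eq_zero, abs_eq_zero]
    exact hlamσR
  have hmap2 : ((|lam - σ| • ((1 - Matrix.vecMulVec vstar vstar) * (J vstar - σ • 1)⁻¹)).map
      Complex.ofReal) = ((|lam - σ| : ℝ) : ℂ) • Mc := by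
    rw [← hmap]
    ext i j
    simp [Matrix.map_apply, Matrix.smul_apply]
  rw [hmap2]
  have hsmul : spectrum ℂ (((|lam - σ| : ℝ) : ℂ) • Mc)
      = (Units.mk0 _ hrne) • spectrum ℂ Mc := by
    rw [← spectrum.unit_smul_eq_smul]
    rfl
  have habs_smul : ∀ z : ℂ, ‖(((|lam - σ| : ℝ) : ℂ) * z)‖
      = |lam - σ| * ‖z‖ := by
    intro z
    rw [norm_mul, Complex.norm_real, Real.norm_eq_abs, abs_abs]
  constructor
  · refine ⟨((|lam - σ| : ℝ) : ℂ) * (μ₂ - (σ : ℂ))⁻¹, ?_, ?_⟩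
    · rw [hsmul]
      exact ⟨(μ₂ - (σ : ℂ))⁻¹, hz₂, rfl⟩
    · simp only [habs_smul, norm_inv, div_eq_mul_inv]
  · rintro x ⟨z, hz, rfl⟩
    rw [hsmul] at hz
    obtain ⟨y, hy, rfl⟩ := hz
    simp only [Units.smul_def, Units.val_mk0, smul_eq_mul, habs_smul, div_eq_mul_inv]
    exact mul_le_mul_of_nonneg_left (hub y hy) (abs_nonneg _)
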